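/- arXiv:1112.3267 — 2 statements merged into one kernel-verified Lean document; each statement's English description precedes it below -/
import Mathlib

section
/- Let Φ : [−a,a] → ℝ be convex continuous, F : [0,T] × ℝ → ℝ continuous and bounded, and h continuous with zero mean on [0,T]. Then the functional I(v) = ∫₀^T [Φ(v') + h(t)v + F(t,v)] dt attains its infimum over the set W ∩ K of zero-mean T-periodic Lipschitz functions with Lipschitz constant at most a. -/
open Set MeasureTheory Filter Topology BoundedContinuousFunction

namespace Stmt7Aux

noncomputable def clamp2 (a x : ℝ) : ℝ := max (-a) (min x a)

lemma clamp2_mem {a : ℝ} (ha : 0 ≤ a) (x : ℝ) : clamp2 a x ∈ Icc (-a) a := by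
  constructor
  · exact le_max_left _ _
  · exact max_le (by linarith) (min_le_right _ _)

lemma clamp2_of_mem {a x : ℝ} (hx : x ∈ Icc (-a) a) : clamp2 a x = x := by
  rcases hx with ⟨h1, h2⟩
  simp [clamp2, min_eq_left h2, max_eq_right h1]

lemma abs_clamp2_sub (a x y : ℝ) : |clamp2 a x - clamp2 a y| ≤ |x - y| := by
  unfold clamp2
  rw [max_comm (-a) (min x a), max_comm (-a) (min y a)]
  refine (abs_max_sub_max_le_abs _ _ _).trans ?_
  rw [min_comm x a, min_comm y a]
  exact (abs_min_sub_min_le_max a x a y).trans (by simp [abs_sub_comm])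

noncomputable def Phit (a : ℝ) (Φ : ℝ → ℝ) (x : ℝ) : ℝ := Φ (clamp2 a x)

lemma continuous_clamp2 (a : ℝ) : Continuous (clamp2 a) :=
  continuous_const.max (continuous_id.min continuous_const)

lemma Phit_continuous {a : ℝ} (ha : 0 ≤ a) {Φ : ℝ → ℝ}
    (hΦ : ContinuousOn Φ (Icc (-a) a)) : Continuous (Phit a Φ) :=
  hΦ.comp_continuous (continuous_clamp2 a) (clamp2_mem ha)

lemma Phit_eq {a : ℝ} (Φ : ℝ → ℝ) {x : ℝ} (hx : x ∈ Icc (-a) a) :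
    Phit a Φ x = Φ x := by rw [Phit, clamp2_of_mem hx]

lemma Phit_bound {a : ℝ} (ha : 0 ≤ a) {Φ : ℝ → ℝ}
    (hΦ : ContinuousOn Φ (Icc (-a) a)) : ∃ C, ∀ x, |Phit a Φ x| ≤ C := by
  obtain ⟨C, hC⟩ := isCompact_Icc.exists_bound_of_continuousOn hΦ
  exact ⟨C, fun x => hC _ (clamp2_mem ha x)⟩

lemma Phit_midpoint {a : ℝ} {Φ : ℝ → ℝ} (hconv : ConvexOn ℝ (Icc (-a) a) Φ)
    {x y : ℝ} (hx : x ∈ Icc (-a) a) (hy : y ∈ Icc (-a) a) :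
    Phit a Φ ((x + y) / 2) ≤ (Phit a Φ x + Phit a Φ y) / 2 := by
  have hmid : (x + y) / 2 ∈ Icc (-a) a := by
    constructor
    · have := hx.1; have := hy.1; linarith
    · have := hx.2; have := hy.2; linarith
  rw [Phit_eq Φ hmid, Phit_eq Φ hx, Phit_eq Φ hy]
  have := hconv.2 hx hy (by norm_num : (0:ℝ) ≤ 1/2) (by norm_num : (0:ℝ) ≤ 1/2) (by norm_num)
  simp only [smul_eq_mul] at this
  calc Φ ((x + y) / 2) = Φ (1/2 * x + 1/2 * y) := by ring_nf
    _ ≤ 1/2 * Φ x + 1/2 * Φ y := this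
    _ = (Φ x + Φ y) / 2 := by ring

lemma Phit_uc {a : ℝ} (ha : 0 ≤ a) {Φ : ℝ → ℝ} (hΦ : ContinuousOn Φ (Icc (-a) a)) :
    ∀ ε > 0, ∃ δ > 0, ∀ x y : ℝ, |x - y| < δ → |Phit a Φ x - Phit a Φ y| < ε := by
  intro ε hε
  have huc := isCompact_Icc.uniformContinuousOn_of_continuous hΦ
  rw [Metric.uniformContinuousOn_iff] at huc
  obtain ⟨δ, hδ, H⟩ := huc ε hε
  refine ⟨δ, hδ, fun x y hxy => ?_⟩
  have := H (clamp2 a x) (clamp2_mem ha x) (clamp2 a y) (clamp2_mem ha y)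
    (by rw [Real.dist_eq]; exact lt_of_le_of_lt (abs_clamp2_sub a x y) hxy)
  rw [Real.dist_eq] at this; exact this

/-- derivative of a function Lipschitz (with constant `a`) on a neighborhood lies in `[-a,a]`. -/
lemma deriv_mem_Icc {a : ℝ} (ha : 0 ≤ a) {g : ℝ → ℝ} {s : Set ℝ} {t : ℝ} (hs : s ∈ nhds t)
    (hl : ∀ x ∈ s, ∀ y ∈ s, |g x - g y| ≤ a * |x - y|) : deriv g t ∈ Icc (-a) a := by
  by_cases hd : DifferentiableAt ℝ g t
  · have hder := hd.hasDerivAt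
    rw [hasDerivAt_iff_tendsto_slope] at hder
    refine isClosed_Icc.mem_of_tendsto hder ?_
    have ht : t ∈ s := mem_of_mem_nhds hs
    filter_upwards [self_mem_nhdsWithin, nhdsWithin_le_nhds hs] with y hy hys
    have hyt : y ≠ t := hy
    have habs : |slope g t y| ≤ a := by
      rw [slope_def_field]
      rw [abs_div]
      rw [div_le_iff₀ (abs_pos.mpr (sub_ne_zero.mpr hyt))]
      exact (hl y hys t ht)
    exact abs_le.mp habs
  · rw [deriv_zero_of_not_differentiableAt hd]
    exact ⟨by linarith, ha⟩

section Dyadic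

variable (T : ℝ)

noncomputable def dlt (k : ℕ) : ℝ := T / 2 ^ k

noncomputable def cellL (k : ℕ) (t : ℝ) : ℝ := dlt T k * ⌊t / dlt T k⌋

noncomputable def slopef (k : ℕ) (g : ℝ → ℝ) (t : ℝ) : ℝ :=
  (g (cellL T k t + dlt T k) - g (cellL T k t)) / dlt T k

variable {T}

lemma dlt_pos (hT : 0 < T) (k : ℕ) : 0 < dlt T k := by
  unfold dlt; positivity

lemma dlt_antitone (hT : 0 < T) : Antitone (dlt T) := by
  intro i j hij
  unfold dlt
  exact div_le_div_of_nonneg_left hT.le (by positivity) (by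
    exact pow_le_pow_right₀ (by norm_num) hij)

lemma dlt_tendsto (hT : 0 < T) : Tendsto (dlt T) atTop (nhds 0) := by
  unfold dlt
  simpa using tendsto_const_nhds.div_atTop
    (tendsto_pow_atTop_atTop_of_one_lt (by norm_num : (1:ℝ) < 2))

lemma cellL_le (hT : 0 < T) (k : ℕ) (t : ℝ) : cellL T k t ≤ t := by
  have hδ := dlt_pos hT k
  have := Int.floor_le (t / dlt T k)
  calc cellL T k t = dlt T k * ⌊t / dlt T k⌋ := rfl
    _ ≤ dlt T k * (t / dlt T k) := by nlinarith
    _ = t := by field_simp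

lemma lt_cellL_add (hT : 0 < T) (k : ℕ) (t : ℝ) : t < cellL T k t + dlt T k := by
  have hδ := dlt_pos hT k
  have := Int.lt_floor_add_one (t / dlt T k)
  have h2 : t / dlt T k * dlt T k < (⌊t / dlt T k⌋ + 1) * dlt T k := by nlinarith
  rw [div_mul_cancel₀ _ hδ.ne'] at h2
  calc t < (⌊t / dlt T k⌋ + 1) * dlt T k := h2
    _ = cellL T k t + dlt T k := by unfold cellL; ring

lemma cellL_nonneg (hT : 0 < T) (k : ℕ) {t : ℝ} (ht : 0 ≤ t) : 0 ≤ cellL T k t := by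
  have hδ := dlt_pos hT k
  have : (0:ℤ) ≤ ⌊t / dlt T k⌋ := Int.floor_nonneg.mpr (by positivity)
  unfold cellL
  have : (0:ℝ) ≤ (⌊t / dlt T k⌋ : ℝ) := by exact_mod_cast this
  nlinarith

lemma cellL_add_le (hT : 0 < T) (k : ℕ) {t : ℝ} (ht : t < T) (ht0 : 0 ≤ t) :
    cellL T k t + dlt T k ≤ T := by
  have hδ := dlt_pos hT k
  have hr : t / dlt T k < 2 ^ k := by
    rw [div_lt_iff₀ hδ]
    unfold dlt
    have h2 : (2:ℝ) ^ k * (T / 2 ^ k) = T := by field_simp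
    rw [h2]; exact ht
  have hfl : (⌊t / dlt T k⌋ : ℝ) ≤ t / dlt T k := Int.floor_le _
  have h1 : (⌊t / dlt T k⌋ : ℤ) < 2 ^ k := by
    have : (⌊t / dlt T k⌋ : ℝ) < 2 ^ k := lt_of_le_of_lt hfl hr
    exact_mod_cast this
  have h2 : (⌊t / dlt T k⌋ : ℝ) + 1 ≤ 2 ^ k := by
    have : (⌊t / dlt T k⌋ : ℤ) + 1 ≤ 2 ^ k := h1
    exact_mod_cast this
  calc cellL T k t + dlt T k = dlt T k * ((⌊t / dlt T k⌋ : ℝ) + 1) := by unfold cellL; ring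
    _ ≤ dlt T k * 2 ^ k := by nlinarith
    _ = T := by unfold dlt; field_simp

lemma slopef_measurable {T : ℝ} (k : ℕ) {g : ℝ → ℝ} (hg : Continuous g) :
    Measurable (slopef T k g) := by
  have hcell : Measurable (cellL T k) := by
    have h1 : Measurable fun t : ℝ => (⌊t / dlt T k⌋ : ℝ) :=
      Measurable.comp (f := fun t : ℝ => ⌊t / dlt T k⌋) (g := fun z : ℤ => (z : ℝ))
        measurable_from_top ((measurable_id.div_const _).floor)
    exact (measurable_const.mul h1)
  exact ((hg.measurable.comp (hcell.add_const _)).sub (hg.measurable.comp hcell)).div_const _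

lemma slopef_mem_Icc {T a : ℝ} (hT : 0 < T) (k : ℕ) {g : ℝ → ℝ}
    (hl : ∀ x y : ℝ, |g x - g y| ≤ a * |x - y|) (t : ℝ) : slopef T k g t ∈ Icc (-a) a := by
  have hδ := dlt_pos hT k
  have h := hl (cellL T k t + dlt T k) (cellL T k t)
  rw [add_sub_cancel_left, abs_of_pos hδ] at h
  refine abs_le.mp ?_
  rw [slopef, abs_div, abs_of_pos hδ, div_le_iff₀ hδ]
  exact h

/-- key convergence: dyadic slopes converge to the derivative at differentiability points. -/
lemma tendsto_slopef {T : ℝ} (hT : 0 < T) {g : ℝ → ℝ} {t : ℝ}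
    (hd : DifferentiableAt ℝ g t) :
    Tendsto (fun k => slopef T k g t) atTop (nhds (deriv g t)) := by
  rw [Metric.tendsto_atTop]
  intro ε hε
  set d := deriv g t
  have hder := hd.hasDerivAt
  rw [hasDerivAt_iff_isLittleO] at hder
  have hev := hder.def (show (0:ℝ) < ε/4 by positivity)
  rw [Metric.eventually_nhds_iff] at hev
  obtain ⟨r, hr, H⟩ := hev
  -- H : ∀ y, dist y t < r → ‖g y - g t - (y - t) • d‖ ≤ ε/4 * ‖y - t‖
  obtain ⟨N, hN⟩ := (Metric.tendsto_atTop.mp (dlt_tendsto hT)) (r/2) (by positivity)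
  refine ⟨N, fun k hk => ?_⟩
  have hδ := dlt_pos hT k
  have hδr : dlt T k < r := by
    have := hN k hk
    rw [Real.dist_eq, sub_zero, abs_of_pos hδ] at this
    linarith
  set l := cellL T k t
  set u := cellL T k t + dlt T k
  have h1 : l ≤ t := cellL_le hT k t
  have h2 : t < u := lt_cellL_add hT k t
  have hlr : dist l t < r := by
    rw [Real.dist_eq, abs_of_nonpos (by linarith)]
    have : u - l = dlt T k := by simp [u, l]
    linarith
  have hur : dist u t < r := by
    rw [Real.dist_eq, abs_of_pos (by linarith)]
    have hu : u = l + dlt T k := rfl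
    linarith
  have Hl := H hlr
  have Hu := H hur
  simp only [Real.norm_eq_abs, smul_eq_mul] at Hl Hu
  have key : |g u - g l - (u - l) * d| ≤ ε/4 * (|u - t| + |l - t|) := by
    have : g u - g l - (u - l) * d = (g u - g t - (u - t) * d) - (g l - g t - (l - t) * d) := by
      ring
    rw [this]
    calc |(g u - g t - (u - t) * d) - (g l - g t - (l - t) * d)|
        ≤ |g u - g t - (u - t) * d| + |g l - g t - (l - t) * d| := abs_sub _ _
      _ ≤ ε/4 * |u - t| + ε/4 * |l - t| := add_le_add Hu Hl
      _ = ε/4 * (|u - t| + |l - t|) := by ring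
  have hsum : |u - t| + |l - t| ≤ 2 * dlt T k := by
    rw [abs_of_pos (by linarith), abs_of_nonpos (by linarith)]
    have hu : u = l + dlt T k := rfl
    linarith
  have key2 : |g u - g l - dlt T k * d| ≤ ε/2 * dlt T k := by
    have hul : u - l = dlt T k := by simp [u, l]
    calc |g u - g l - dlt T k * d| = |g u - g l - (u - l) * d| := by rw [hul]
      _ ≤ ε/4 * (|u - t| + |l - t|) := key
      _ ≤ ε/4 * (2 * dlt T k) := by nlinarith
      _ = ε/2 * dlt T k := by ring
  rw [Real.dist_eq]
  have : slopef T k g t - d = (g u - g l - dlt T k * d) / dlt T k := by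
    rw [slopef]
    field_simp
    rfl
  rw [this, abs_div, abs_of_pos hδ, div_lt_iff₀ hδ]
  calc |g u - g l - dlt T k * d| ≤ ε/2 * dlt T k := key2
    _ < ε * dlt T k := by nlinarith

lemma intervalIntegrable_of_bdd {f : ℝ → ℝ} {c p q : ℝ}
    (hm : Measurable f) (hb : ∀ x, |f x| ≤ c) : IntervalIntegrable f volume p q := by
  refine (intervalIntegrable_const (c := c)).mono_fun hm.aestronglyMeasurable ?_
  filter_upwards with x
  simpa [Real.norm_eq_abs, abs_of_nonneg (le_trans (abs_nonneg _) (hb x))] using hb x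

/-- On the half-open cell, `slopef` is the constant slope of cell `j`. -/
lemma slopef_eq_on_cell {T : ℝ} (hT : 0 < T) (k : ℕ) (g : ℝ → ℝ) (j : ℕ)
    {t : ℝ} (h1 : (j : ℝ) * dlt T k ≤ t) (h2 : t < ((j : ℝ) + 1) * dlt T k) :
    slopef T k g t = (g (((j : ℝ) + 1) * dlt T k) - g ((j : ℝ) * dlt T k)) / dlt T k := by
  have hδ := dlt_pos hT k
  have hfl : ⌊t / dlt T k⌋ = (j : ℤ) := by
    rw [Int.floor_eq_iff]
    constructor
    · rw [le_div_iff₀ hδ]; exact_mod_cast h1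
    · rw [div_lt_iff₀ hδ]; push_cast; linarith
  have hc : cellL T k t = (j : ℝ) * dlt T k := by
    rw [cellL, hfl]; push_cast; ring
  rw [slopef, hc]
  ring_nf

lemma slope_div_mem_Icc {a : ℝ} {g : ℝ → ℝ} (hl : ∀ x y : ℝ, |g x - g y| ≤ a * |x - y|)
    {δ : ℝ} (hδ : 0 < δ) (p : ℝ) : (g (p + δ) - g p) / δ ∈ Icc (-a) a := by
  have h := hl (p + δ) p
  rw [add_sub_cancel_left, abs_of_pos hδ] at h
  refine abs_le.mp ?_
  rw [abs_div, abs_of_pos hδ, div_le_iff₀ hδ]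
  exact h

lemma integral_Phit_slopef_eq_sum {T a : ℝ} (hT : 0 < T) (ha : 0 ≤ a) {Φ : ℝ → ℝ}
    (hΦ : ContinuousOn Φ (Icc (-a) a)) {g : ℝ → ℝ} (hg : Continuous g) (k : ℕ) :
    ∫ t in (0:ℝ)..T, Phit a Φ (slopef T k g t)
      = ∑ j ∈ Finset.range (2 ^ k), dlt T k *
          Phit a Φ ((g (((j:ℝ) + 1) * dlt T k) - g ((j:ℝ) * dlt T k)) / dlt T k) := by
  obtain ⟨C, hC⟩ := Phit_bound ha hΦ
  have hPc : Continuous (Phit a Φ) := Phit_continuous ha hΦ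
  have hmeas : Measurable fun t => Phit a Φ (slopef T k g t) :=
    hPc.measurable.comp (slopef_measurable k hg)
  have hδ := dlt_pos hT k
  set A : ℕ → ℝ := fun j => (j : ℝ) * dlt T k with hA
  have hsum := intervalIntegral.sum_integral_adjacent_intervals
    (a := A) (μ := volume) (n := 2 ^ k)
    (fun i _ => intervalIntegrable_of_bdd hmeas (fun x => hC _))
  have hA0 : A 0 = 0 := by simp [hA]
  have hAT : A (2 ^ k) = T := by
    simp only [hA]; push_cast
    unfold dlt; field_simp
  rw [hA0, hAT] at hsum
  rw [← hsum]
  refine Finset.sum_congr rfl fun j hj => ?_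
  have hne : ∀ᵐ t : ℝ, t ≠ A (j + 1) := by
    rw [ae_iff]
    have hset : {t : ℝ | ¬t ≠ A (j+1)} = {A (j+1)} := by ext t; simp
    rw [hset]
    exact measure_singleton _
  have hcong : ∫ t in A j..A (j+1), Phit a Φ (slopef T k g t)
      = ∫ t in A j..A (j+1),
          Phit a Φ ((g (((j:ℝ) + 1) * dlt T k) - g ((j:ℝ) * dlt T k)) / dlt T k) := by
    refine intervalIntegral.integral_congr_ae ?_
    filter_upwards [hne] with t htne htmem
    have hAj : A j ≤ A (j+1) := by
      simp only [hA]; push_cast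
      nlinarith
    rw [uIoc_of_le hAj] at htmem
    have h1 : (j : ℝ) * dlt T k ≤ t := le_of_lt htmem.1
    have h2 : t < ((j : ℝ) + 1) * dlt T k := by
      rcases lt_of_le_of_ne htmem.2 htne with h
      simpa [hA] using h
    rw [slopef_eq_on_cell hT k g j h1 h2]
  rw [hcong, intervalIntegral.integral_const, smul_eq_mul]
  congr 1
  simp only [hA]; push_cast; ring

lemma sum_range_two_mul (n : ℕ) (f : ℕ → ℝ) :
    ∑ j ∈ Finset.range (2 * n), f j = ∑ j ∈ Finset.range n, (f (2 * j) + f (2 * j + 1)) := by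
  induction n with
  | zero => simp
  | succ n ih =>
      rw [Finset.sum_range_succ, ← ih, show 2 * (n+1) = 2*n + 1 + 1 by ring,
        Finset.sum_range_succ, Finset.sum_range_succ]
      ring

lemma cell_midpoint_ineq {a : ℝ} {Φ : ℝ → ℝ} (hconv : ConvexOn ℝ (Icc (-a) a) Φ)
    {g : ℝ → ℝ} (hl : ∀ x y : ℝ, |g x - g y| ≤ a * |x - y|)
    {δ' : ℝ} (hδ' : 0 < δ') (p : ℝ) :
    2 * δ' * Phit a Φ ((g (p + 2 * δ') - g p) / (2 * δ'))
      ≤ δ' * Phit a Φ ((g (p + δ') - g p) / δ')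
        + δ' * Phit a Φ ((g (p + δ' + δ') - g (p + δ')) / δ') := by
  set x := (g (p + δ') - g p) / δ' with hx
  set y := (g (p + δ' + δ') - g (p + δ')) / δ' with hy
  have hxm : x ∈ Icc (-a) a := slope_div_mem_Icc hl hδ' p
  have hym : y ∈ Icc (-a) a := slope_div_mem_Icc hl hδ' (p + δ')
  have hsplit : (g (p + 2 * δ') - g p) / (2 * δ') = (x + y) / 2 := by
    have e : p + 2 * δ' = p + δ' + δ' := by ring
    rw [e, hx, hy, ← add_div, div_div]
    ring_nf
  rw [hsplit]
  have := Phit_midpoint hconv hxm hym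
  nlinarith [this]

lemma Efun_mono {T a : ℝ} (hT : 0 < T) (ha : 0 ≤ a) {Φ : ℝ → ℝ}
    (hconv : ConvexOn ℝ (Icc (-a) a) Φ) (hΦ : ContinuousOn Φ (Icc (-a) a))
    {g : ℝ → ℝ} (hl : ∀ x y : ℝ, |g x - g y| ≤ a * |x - y|) (hg : Continuous g) (k : ℕ) :
    ∫ t in (0:ℝ)..T, Phit a Φ (slopef T k g t)
      ≤ ∫ t in (0:ℝ)..T, Phit a Φ (slopef T (k+1) g t) := by
  rw [integral_Phit_slopef_eq_sum hT ha hΦ hg k, integral_Phit_slopef_eq_sum hT ha hΦ hg (k+1)]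
  have h2 : (2:ℕ) ^ (k+1) = 2 * 2 ^ k := by ring
  rw [h2, sum_range_two_mul]
  refine Finset.sum_le_sum fun j hj => ?_
  have hδ' := dlt_pos hT (k+1)
  have hδδ' : dlt T k = 2 * dlt T (k+1) := by
    unfold dlt; rw [pow_succ]; ring
  rw [hδδ']
  set δ' := dlt T (k+1)
  have e1 : ((j:ℝ) + 1) * (2 * δ') = (j:ℝ) * (2 * δ') + 2 * δ' := by ring
  have e2 : ((2 * j : ℕ) : ℝ) * δ' = (j:ℝ) * (2 * δ') := by push_cast; ring
  have e3 : (((2 * j : ℕ) : ℝ) + 1) * δ' = (j:ℝ) * (2 * δ') + δ' := by push_cast; ring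
  have e4 : ((2 * j + 1 : ℕ) : ℝ) * δ' = (j:ℝ) * (2 * δ') + δ' := by push_cast; ring
  have e5 : (((2 * j + 1 : ℕ) : ℝ) + 1) * δ' = (j:ℝ) * (2 * δ') + δ' + δ' := by push_cast; ring
  rw [e1, e2, e3, e4, e5]
  exact cell_midpoint_ineq hconv hl hδ' ((j:ℝ) * (2 * δ'))

lemma tendsto_Efun {T a : ℝ} (hT : 0 < T) (ha : 0 ≤ a) {Φ : ℝ → ℝ}
    (hΦ : ContinuousOn Φ (Icc (-a) a)) {g : ℝ → ℝ} {a' : NNReal} (hg : LipschitzWith a' g) :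
    Tendsto (fun k => ∫ t in (0:ℝ)..T, Phit a Φ (slopef T k g t)) atTop
      (nhds (∫ t in (0:ℝ)..T, Phit a Φ (deriv g t))) := by
  obtain ⟨C, hC⟩ := Phit_bound ha hΦ
  have hgc : Continuous g := hg.continuous
  have hPc : Continuous (Phit a Φ) := Phit_continuous ha hΦ
  simp only [intervalIntegral.integral_of_le hT.le]
  refine tendsto_integral_of_dominated_convergence (fun _ => C) ?_ ?_ ?_ ?_
  · exact fun k => (hPc.measurable.comp (slopef_measurable k hgc)).aestronglyMeasurable
  · exact integrable_const C
  · intro k; filter_upwards with t; rw [Real.norm_eq_abs]; exact hC _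
  · refine ae_restrict_of_ae ?_
    filter_upwards [hg.ae_differentiableAt_real] with t ht
    exact (hPc.tendsto _).comp (tendsto_slopef hT ht)

end Dyadic

section FunctionSpace

variable {T a : ℝ}

noncomputable def extf (hT : (0:ℝ) ≤ T) (f : Icc (0:ℝ) T →ᵇ ℝ) : ℝ → ℝ :=
  IccExtend hT ⇑f

lemma extf_apply (hT : (0:ℝ) ≤ T) (f : Icc (0:ℝ) T →ᵇ ℝ) (t : ℝ) :
    extf hT f t = f (projIcc 0 T hT t) := rfl

lemma extf_of_mem (hT : (0:ℝ) ≤ T) (f : Icc (0:ℝ) T →ᵇ ℝ) {t : ℝ} (ht : t ∈ Icc (0:ℝ) T) :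
    extf hT f t = f ⟨t, ht⟩ := IccExtend_of_mem hT _ ht

lemma extf_cont (hT : (0:ℝ) ≤ T) (f : Icc (0:ℝ) T →ᵇ ℝ) : Continuous (extf hT f) :=
  f.continuous.comp continuous_projIcc

lemma extf_dist (hT : (0:ℝ) ≤ T) (f f' : Icc (0:ℝ) T →ᵇ ℝ) (t : ℝ) :
    |extf hT f t - extf hT f' t| ≤ dist f f' := by
  rw [extf_apply, extf_apply, ← Real.dist_eq]
  exact BoundedContinuousFunction.dist_coe_le_dist _

lemma lip_abs (ha : 0 ≤ a) {g : ℝ → ℝ} (hg : LipschitzWith (Real.toNNReal a) g) :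
    ∀ x y : ℝ, |g x - g y| ≤ a * |x - y| := fun x y => by
  have := hg.dist_le_mul x y
  rwa [Real.dist_eq, Real.dist_eq, Real.coe_toNNReal a ha] at this

/-- The admissible set. -/
def Kset (T a : ℝ) (hT : (0:ℝ) ≤ T) : Set (Icc (0:ℝ) T →ᵇ ℝ) :=
  {f | LipschitzWith (Real.toNNReal a) (extf hT f) ∧ extf hT f 0 = extf hT f T ∧
       (∫ t in (0:ℝ)..T, extf hT f t) = 0}

lemma Kset_bound (hT : 0 < T) (ha : 0 ≤ a) {f : Icc (0:ℝ) T →ᵇ ℝ}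
    (hf : f ∈ Kset T a hT.le) : ∀ s ∈ Icc (0:ℝ) T, |extf hT.le f s| ≤ a * T := by
  obtain ⟨hlip, -, hzero⟩ := hf
  set g := extf hT.le f with hg
  have hgc : Continuous g := extf_cont hT.le f
  have habs := lip_abs ha hlip
  have hii : IntervalIntegrable g volume 0 T := hgc.intervalIntegrable 0 T
  have h₀ : ∃ t₀ ∈ Icc (0:ℝ) T, g t₀ ≤ 0 := by
    by_contra hcon
    push_neg at hcon
    have : 0 < ∫ t in (0:ℝ)..T, g t := by
      refine intervalIntegral.intervalIntegral_pos_of_pos_on hii ?_ hT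
      exact fun x hx => hcon x ⟨hx.1.le, hx.2.le⟩
    rw [hzero] at this; exact lt_irrefl 0 this
  have h₁ : ∃ t₁ ∈ Icc (0:ℝ) T, 0 ≤ g t₁ := by
    by_contra hcon
    push_neg at hcon
    have : 0 < ∫ t in (0:ℝ)..T, -g t := by
      refine intervalIntegral.intervalIntegral_pos_of_pos_on hii.neg ?_ hT
      exact fun x hx => neg_pos.mpr (hcon x ⟨hx.1.le, hx.2.le⟩)
    rw [intervalIntegral.integral_neg, hzero, neg_zero] at this
    exact lt_irrefl 0 this
  obtain ⟨t₀, ht₀, hgt₀⟩ := h₀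
  obtain ⟨t₁, ht₁, hgt₁⟩ := h₁
  intro s hs
  have hd₀ : |s - t₀| ≤ T := by
    rw [abs_le]; constructor
    · have := hs.1; have := ht₀.2; linarith
    · have := hs.2; have := ht₀.1; linarith
  have hd₁ : |s - t₁| ≤ T := by
    rw [abs_le]; constructor
    · have := hs.1; have := ht₁.2; linarith
    · have := hs.2; have := ht₁.1; linarith
  have hub : g s ≤ a * T := by
    have h := habs s t₀
    have : g s - g t₀ ≤ a * |s - t₀| := (le_abs_self _).trans h
    nlinarith [abs_nonneg (s - t₀)]
  have hlb : -(a * T) ≤ g s := by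
    have h := habs t₁ s
    have : g t₁ - g s ≤ a * |t₁ - s| := (le_abs_self _).trans h
    rw [abs_sub_comm] at h
    have h2 : g t₁ - g s ≤ a * |s - t₁| := by rwa [abs_sub_comm] at this
    nlinarith [abs_nonneg (s - t₁)]
  rw [abs_le]; exact ⟨hlb, hub⟩

lemma Kset_closed (hT : 0 < T) (ha : 0 ≤ a) : IsClosed (Kset T a hT.le) := by
  have h1 : IsClosed {f : Icc (0:ℝ) T →ᵇ ℝ | LipschitzWith (Real.toNNReal a) (extf hT.le f)} := by
    have heq : {f : Icc (0:ℝ) T →ᵇ ℝ | LipschitzWith (Real.toNNReal a) (extf hT.le f)} =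
        ⋂ (x : ℝ) (y : ℝ), {f : Icc (0:ℝ) T →ᵇ ℝ |
          dist (f (projIcc 0 T hT.le x)) (f (projIcc 0 T hT.le y)) ≤ (Real.toNNReal a) * dist x y} := by
      ext f
      simp only [mem_setOf_eq, mem_iInter, lipschitzWith_iff_dist_le_mul, extf_apply]
    rw [heq]
    exact isClosed_iInter fun x => isClosed_iInter fun y =>
      isClosed_le ((continuous_eval_const (projIcc 0 T hT.le x)).dist
        (continuous_eval_const (projIcc 0 T hT.le y))) continuous_const
  have h2 : IsClosed {f : Icc (0:ℝ) T →ᵇ ℝ | extf hT.le f 0 = extf hT.le f T} := by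
    simp only [extf_apply]
    exact isClosed_eq (continuous_eval_const (projIcc 0 T hT.le 0))
      (continuous_eval_const (projIcc 0 T hT.le T))
  have hintc : Continuous fun f : Icc (0:ℝ) T →ᵇ ℝ => ∫ t in (0:ℝ)..T, extf hT.le f t := by
    have : LipschitzWith (Real.toNNReal T) fun f : Icc (0:ℝ) T →ᵇ ℝ =>
        ∫ t in (0:ℝ)..T, extf hT.le f t := by
      rw [lipschitzWith_iff_dist_le_mul]
      intro f f'
      rw [Real.dist_eq, ← intervalIntegral.integral_sub ((extf_cont hT.le f).intervalIntegrable 0 T)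
        ((extf_cont hT.le f').intervalIntegrable 0 T), Real.coe_toNNReal T hT.le]
      have := intervalIntegral.norm_integral_le_of_norm_le_const
        (C := dist f f') (a := (0:ℝ)) (b := T)
        (f := fun t => extf hT.le f t - extf hT.le f' t) ?_
      · rw [Real.norm_eq_abs] at this
        calc |∫ t in (0:ℝ)..T, (extf hT.le f t - extf hT.le f' t)| ≤ dist f f' * |T - 0| := this
          _ = T * dist f f' := by rw [abs_of_pos (by linarith : (0:ℝ) < T - 0)]; ring
      · intro x hx
        rw [Real.norm_eq_abs]
        exact extf_dist hT.le f f' x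
    exact this.continuous
  have h3 : IsClosed {f : Icc (0:ℝ) T →ᵇ ℝ | (∫ t in (0:ℝ)..T, extf hT.le f t) = 0} :=
    isClosed_eq hintc continuous_const
  exact h1.inter (h2.inter h3)
lemma Kset_compact (hT : 0 < T) (ha : 0 ≤ a) : IsCompact (Kset T a hT.le) := by
  haveI : CompactSpace ↥(Icc (0:ℝ) T) := isCompact_iff_compactSpace.mp isCompact_Icc
  refine BoundedContinuousFunction.arzela_ascoli₂ (Icc (-(a*T)) (a*T)) isCompact_Icc
    (Kset T a hT.le) (Kset_closed hT ha) ?_ ?_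
  · intro f x hf
    have hb := Kset_bound hT ha hf x.1 x.2
    rw [extf_of_mem hT.le f x.2] at hb
    rw [abs_le] at hb
    simpa using hb
  · refine Metric.equicontinuous_of_continuity_modulus (fun d => a * d) ?_ _ ?_
    · have : Tendsto (fun d : ℝ => a * d) (nhds 0) (nhds (a * 0)) :=
        (continuous_const.mul continuous_id).tendsto 0
      simpa using this
    · rintro x y ⟨f, hf⟩
      have habs := lip_abs ha hf.1
      have hxy := habs x.1 y.1
      rw [extf_of_mem hT.le f x.2, extf_of_mem hT.le f y.2] at hxy
      rw [Real.dist_eq, Subtype.dist_eq, Real.dist_eq]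
      simpa using hxy

lemma Kset_nonempty (hT : 0 < T) (ha : 0 ≤ a) : (Kset T a hT.le).Nonempty := by
  have h0 : extf hT.le (0 : Icc (0:ℝ) T →ᵇ ℝ) = fun _ => (0:ℝ) := by
    funext t; rw [extf_apply]; simp
  refine ⟨0, ?_, ?_, ?_⟩
  · rw [h0]
    exact LipschitzWith.const' 0
  · rw [h0]
  · rw [h0]; simp

lemma Jk_cont (hT : 0 < T) (ha : 0 ≤ a) {Φ h : ℝ → ℝ} {F : ℝ → ℝ → ℝ}
    (hΦ : ContinuousOn Φ (Icc (-a) a))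
    (hFcont : ContinuousOn (fun p : ℝ × ℝ => F p.1 p.2) (Icc 0 T ×ˢ univ))
    (hh : Continuous h) (k : ℕ) :
    ContinuousOn (fun f : Icc (0:ℝ) T →ᵇ ℝ =>
      (∫ t in (0:ℝ)..T, Phit a Φ (slopef T k (extf hT.le f) t))
        + ∫ t in (0:ℝ)..T, (h t * extf hT.le f t + F t (extf hT.le f t)))
      (Kset T a hT.le) := by
  have hPc : Continuous (Phit a Φ) := Phit_continuous ha hΦ
  obtain ⟨CP, hCP⟩ := Phit_bound ha hΦ
  obtain ⟨Ch, hCh⟩ := isCompact_Icc.exists_bound_of_continuousOn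
    (hh.continuousOn : ContinuousOn h (Icc (0:ℝ) T))
  have hChnn : 0 ≤ Ch := le_trans (norm_nonneg _) (hCh 0 ⟨le_refl 0, hT.le⟩)
  set M := a * T + 1 with hM
  have hMnn : 0 < M := by have : 0 ≤ a * T := by positivity
                          linarith
  have hFuc := (isCompact_Icc.prod (isCompact_Icc (a := -M) (b := M))).uniformContinuousOn_of_continuous
      (hFcont.mono (fun p hp => ⟨hp.1, mem_univ _⟩))
  rw [Metric.uniformContinuousOn_iff] at hFuc
  rw [Metric.continuousOn_iff]
  intro f hf ε hε
  set ε4 := ε / (4 * (T + 1)) with hε4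
  have hε4pos : 0 < ε4 := by rw [hε4]; positivity
  obtain ⟨δΦ, hδΦ, HΦ⟩ := Phit_uc ha hΦ ε4 hε4pos
  obtain ⟨δF, hδF, HF⟩ := hFuc ε4 hε4pos
  have hdltpos := dlt_pos hT k
  set δ := min (min (δΦ * dlt T k / 2) δF) (ε4 / (Ch + 1)) with hδdef
  have hδpos : 0 < δ := by
    refine lt_min (lt_min (by positivity) hδF) (by positivity)
  refine ⟨δ, hδpos, fun f' hf' hdist => ?_⟩
  set g := extf hT.le f with hg
  set g' := extf hT.le f' with hg'
  have hgc : Continuous g := extf_cont hT.le f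
  have hgc' : Continuous g' := extf_cont hT.le f'
  have hgd : ∀ t, |g' t - g t| ≤ dist f' f := fun t => extf_dist hT.le f' f t
  -- E part
  have hEint : IntervalIntegrable (fun t => Phit a Φ (slopef T k g t)) volume 0 T :=
    intervalIntegrable_of_bdd (hPc.measurable.comp (slopef_measurable k hgc)) (fun x => hCP _)
  have hEint' : IntervalIntegrable (fun t => Phit a Φ (slopef T k g' t)) volume 0 T :=
    intervalIntegrable_of_bdd (hPc.measurable.comp (slopef_measurable k hgc')) (fun x => hCP _)
  have hE : |(∫ t in (0:ℝ)..T, Phit a Φ (slopef T k g' t))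
      - ∫ t in (0:ℝ)..T, Phit a Φ (slopef T k g t)| ≤ ε4 * T := by
    rw [← intervalIntegral.integral_sub hEint' hEint]
    have hb := intervalIntegral.norm_integral_le_of_norm_le_const (C := ε4) (a := (0:ℝ)) (b := T)
      (f := fun t => Phit a Φ (slopef T k g' t) - Phit a Φ (slopef T k g t)) ?_
    · rw [Real.norm_eq_abs] at hb
      calc |∫ t in (0:ℝ)..T, (Phit a Φ (slopef T k g' t) - Phit a Φ (slopef T k g t))|
          ≤ ε4 * |T - 0| := hb
        _ = ε4 * T := by rw [sub_zero, abs_of_pos hT]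
    · intro x hx
      rw [Real.norm_eq_abs]
      have hslope : |slopef T k g' x - slopef T k g x| < δΦ := by
        have h1 := hgd (cellL T k x + dlt T k)
        have h2 := hgd (cellL T k x)
        have : |slopef T k g' x - slopef T k g x|
            ≤ (|g' (cellL T k x + dlt T k) - g (cellL T k x + dlt T k)|
              + |g' (cellL T k x) - g (cellL T k x)|) / dlt T k := by
          rw [slopef, slopef, div_sub_div_same, abs_div, abs_of_pos hdltpos]
          refine (div_le_div_iff_of_pos_right hdltpos).mpr ?_
          calc |g' (cellL T k x + dlt T k) - g' (cellL T k x)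
                - (g (cellL T k x + dlt T k) - g (cellL T k x))|
              = |(g' (cellL T k x + dlt T k) - g (cellL T k x + dlt T k))
                - (g' (cellL T k x) - g (cellL T k x))| := by ring_nf
            _ ≤ _ := abs_sub _ _
        have hd2 : dist f' f < δΦ * dlt T k / 2 :=
          lt_of_lt_of_le hdist (le_trans (min_le_left _ _) (min_le_left _ _))
        calc |slopef T k g' x - slopef T k g x| ≤ _ := this
          _ ≤ (dist f' f + dist f' f) / dlt T k :=
              (div_le_div_iff_of_pos_right hdltpos).mpr (add_le_add h1 h2)
          _ < δΦ := by rw [div_lt_iff₀ hdltpos]; nlinarith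
      exact le_of_lt (HΦ _ _ hslope)
  -- G part
  have hGint : IntervalIntegrable (fun t => h t * g t + F t (g t)) volume 0 T := by
    refine ContinuousOn.intervalIntegrable ?_
    rw [uIcc_of_le hT.le]
    refine ((hh.continuousOn).mul (hgc.continuousOn)).add ?_
    refine ContinuousOn.comp (f := fun t => ((t : ℝ), g t)) hFcont ?_ ?_
    · exact (continuous_id.prodMk hgc).continuousOn
    · intro t ht; exact ⟨ht, mem_univ _⟩
  have hGint' : IntervalIntegrable (fun t => h t * g' t + F t (g' t)) volume 0 T := by
    refine ContinuousOn.intervalIntegrable ?_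
    rw [uIcc_of_le hT.le]
    refine ((hh.continuousOn).mul (hgc'.continuousOn)).add ?_
    refine ContinuousOn.comp (f := fun t => ((t : ℝ), g' t)) hFcont ?_ ?_
    · exact (continuous_id.prodMk hgc').continuousOn
    · intro t ht; exact ⟨ht, mem_univ _⟩
  have hG : |(∫ t in (0:ℝ)..T, (h t * g' t + F t (g' t)))
      - ∫ t in (0:ℝ)..T, (h t * g t + F t (g t))| ≤ 2 * ε4 * T := by
    rw [← intervalIntegral.integral_sub hGint' hGint]
    have hb := intervalIntegral.norm_integral_le_of_norm_le_const (C := 2 * ε4) (a := (0:ℝ)) (b := T)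
      (f := fun t => (h t * g' t + F t (g' t)) - (h t * g t + F t (g t))) ?_
    · rw [Real.norm_eq_abs] at hb
      calc |∫ t in (0:ℝ)..T, ((h t * g' t + F t (g' t)) - (h t * g t + F t (g t)))|
          ≤ 2 * ε4 * |T - 0| := hb
        _ = 2 * ε4 * T := by rw [sub_zero, abs_of_pos hT]
    · intro x hx
      rw [uIoc_of_le hT.le] at hx
      have hxI : x ∈ Icc (0:ℝ) T := ⟨hx.1.le, hx.2⟩
      have hbg := Kset_bound hT ha hf x hxI
      have hbg' := Kset_bound hT ha hf' x hxI
      have hgM : g x ∈ Icc (-M) M := by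
        rw [abs_le] at hbg
        constructor
        · rw [hM]; linarith [hbg.1]
        · rw [hM]; linarith [hbg.2]
      have hgM' : g' x ∈ Icc (-M) M := by
        rw [abs_le] at hbg'
        constructor
        · rw [hM]; linarith [hbg'.1]
        · rw [hM]; linarith [hbg'.2]
      have hFdiff : |F x (g' x) - F x (g x)| < ε4 := by
        have hmem1 : ((x, g' x) : ℝ × ℝ) ∈ Icc (0:ℝ) T ×ˢ Icc (-M) M := ⟨hxI, hgM'⟩
        have hmem2 : ((x, g x) : ℝ × ℝ) ∈ Icc (0:ℝ) T ×ˢ Icc (-M) M := ⟨hxI, hgM⟩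
        have hdd : dist ((x, g' x) : ℝ × ℝ) ((x, g x) : ℝ × ℝ) < δF := by
          rw [Prod.dist_eq]
          have h2 : dist (g' x) (g x) ≤ dist f' f := by
            rw [Real.dist_eq]; exact hgd x
          have h3 : dist f' f < δF :=
            lt_of_lt_of_le hdist (le_trans (min_le_left _ _) (min_le_right _ _))
          simp only [dist_self]
          exact max_lt hδF (lt_of_le_of_lt h2 h3)
        have := HF _ hmem1 _ hmem2 hdd
        rwa [Real.dist_eq] at this
      have hhdiff : |h x * g' x - h x * g x| ≤ ε4 := by
        have : |h x * g' x - h x * g x| = |h x| * |g' x - g x| := by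
          rw [← abs_mul]; ring_nf
        rw [this]
        have h1 : |h x| ≤ Ch := by
          have := hCh x hxI; rwa [Real.norm_eq_abs] at this
        have h2 : |g' x - g x| ≤ ε4 / (Ch + 1) :=
          le_trans (hgd x) (le_of_lt (lt_of_lt_of_le hdist (min_le_right _ _)))
        calc |h x| * |g' x - g x| ≤ Ch * (ε4 / (Ch + 1)) := by
              exact mul_le_mul h1 h2 (abs_nonneg _) hChnn
          _ ≤ ε4 := by
              have hlt : Ch / (Ch + 1) ≤ 1 := by
                rw [div_le_one (by linarith)]; linarith
              calc Ch * (ε4 / (Ch + 1)) = ε4 * (Ch / (Ch + 1)) := by ring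
                _ ≤ ε4 * 1 := by nlinarith
                _ = ε4 := mul_one _
      rw [Real.norm_eq_abs]
      calc |(h x * g' x + F x (g' x)) - (h x * g x + F x (g x))|
          = |(h x * g' x - h x * g x) + (F x (g' x) - F x (g x))| := by ring_nf
        _ ≤ |h x * g' x - h x * g x| + |F x (g' x) - F x (g x)| := abs_add_le _ _
        _ ≤ ε4 + ε4 := add_le_add hhdiff hFdiff.le
        _ = 2 * ε4 := by ring
  -- combine
  rw [Real.dist_eq]
  have : ∀ A A' B B' : ℝ, |(A' + B') - (A + B)| ≤ |A' - A| + |B' - B| := by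
    intro A A' B B'
    calc |(A' + B') - (A + B)| = |(A' - A) + (B' - B)| := by ring_nf
      _ ≤ _ := abs_add_le _ _
  calc |((∫ t in (0:ℝ)..T, Phit a Φ (slopef T k g' t))
        + ∫ t in (0:ℝ)..T, (h t * g' t + F t (g' t)))
      - ((∫ t in (0:ℝ)..T, Phit a Φ (slopef T k g t))
        + ∫ t in (0:ℝ)..T, (h t * g t + F t (g t)))|
      ≤ |(∫ t in (0:ℝ)..T, Phit a Φ (slopef T k g' t))
          - ∫ t in (0:ℝ)..T, Phit a Φ (slopef T k g t)|
        + |(∫ t in (0:ℝ)..T, (h t * g' t + F t (g' t)))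
          - ∫ t in (0:ℝ)..T, (h t * g t + F t (g t))| := this _ _ _ _
    _ ≤ ε4 * T + 2 * ε4 * T := add_le_add hE hG
    _ < ε := by
        have hT1 : 0 < T + 1 := by linarith
        rw [hε4]
        rw [show ε / (4 * (T + 1)) * T + 2 * (ε / (4 * (T + 1))) * T
            = ε * (3 * T) / (4 * (T + 1)) by ring]
        rw [div_lt_iff₀ (by positivity : (0:ℝ) < 4 * (T + 1))]
        nlinarith

lemma repr_integral (hT : 0 < T) (ha : 0 < a) {Φ h : ℝ → ℝ} {F : ℝ → ℝ → ℝ}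
    (hΦ : ContinuousOn Φ (Icc (-a) a))
    (hFcont : ContinuousOn (fun p : ℝ × ℝ => F p.1 p.2) (Icc 0 T ×ˢ univ))
    (hh : Continuous h)
    {v g : ℝ → ℝ} (hvg : ∀ t ∈ Icc (0:ℝ) T, g t = v t)
    (hglip : LipschitzWith (Real.toNNReal a) g) :
    (∫ t in (0:ℝ)..T, (Φ (deriv v t) + h t * v t + F t (v t)))
      = (∫ t in (0:ℝ)..T, Phit a Φ (deriv g t)) + ∫ t in (0:ℝ)..T, (h t * g t + F t (g t)) := by
  have hgc : Continuous g := hglip.continuous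
  have hPc : Continuous (Phit a Φ) := Phit_continuous ha.le hΦ
  obtain ⟨CP, hCP⟩ := Phit_bound ha.le hΦ
  have habs := lip_abs ha.le hglip
  -- pointwise equality on Ioo
  have hpt : ∀ t ∈ Ioo (0:ℝ) T,
      Φ (deriv v t) + h t * v t + F t (v t)
        = Phit a Φ (deriv g t) + (h t * g t + F t (g t)) := by
    intro t ht
    have hmem : Icc (0:ℝ) T ∈ nhds t := Icc_mem_nhds ht.1 ht.2
    have hev : g =ᶠ[nhds t] v := eventually_of_mem hmem hvg
    have hdeq : deriv g t = deriv v t := hev.deriv_eq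
    have hdmem : deriv g t ∈ Icc (-a) a :=
      deriv_mem_Icc ha.le univ_mem (fun x _ y _ => habs x y)
    have hgt : g t = v t := hvg t ⟨ht.1.le, ht.2.le⟩
    rw [Phit_eq Φ hdmem, hdeq, hgt]
    ring
  -- integrability of components
  have hint1 : IntervalIntegrable (fun t => Phit a Φ (deriv g t)) volume 0 T :=
    intervalIntegrable_of_bdd (hPc.measurable.comp (measurable_deriv g)) (fun x => hCP _)
  have hint2 : IntervalIntegrable (fun t => h t * g t + F t (g t)) volume 0 T := by
    refine ContinuousOn.intervalIntegrable ?_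
    rw [uIcc_of_le hT.le]
    refine ((hh.continuousOn).mul (hgc.continuousOn)).add ?_
    refine ContinuousOn.comp (f := fun t => ((t : ℝ), g t)) hFcont ?_ ?_
    · exact (continuous_id.prodMk hgc).continuousOn
    · intro t ht; exact ⟨ht, mem_univ _⟩
  have hcong : (∫ t in (0:ℝ)..T, (Φ (deriv v t) + h t * v t + F t (v t)))
      = ∫ t in (0:ℝ)..T, (Phit a Φ (deriv g t) + (h t * g t + F t (g t))) := by
    refine intervalIntegral.integral_congr_ae ?_
    have hne : ∀ᵐ t : ℝ, t ≠ T := by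
      rw [ae_iff]
      have hset : {t : ℝ | ¬t ≠ T} = {T} := by ext t; simp
      rw [hset]
      exact measure_singleton _
    filter_upwards [hne] with t htne htmem
    rw [uIoc_of_le hT.le] at htmem
    have : t ∈ Ioo (0:ℝ) T := ⟨htmem.1, lt_of_le_of_ne htmem.2 htne⟩
    rw [hpt t this]
  rw [hcong, intervalIntegral.integral_add hint1 hint2]

end FunctionSpace

end Stmt7Aux

open Stmt7Aux in
/-- The functional `I(v) = ∫₀^T [Φ(v') + h v + F(t,v)] dt`, with `Φ` convex continuous
on `[−a,a]`, `F` continuous and bounded, and `h` continuous with zero mean, attains its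
infimum on the set `W ∩ K` of zero-mean `T`-periodic Lipschitz functions with
Lipschitz constant at most `a`. -/
theorem stmt7 (T a : ℝ) (hT : 0 < T) (ha : 0 < a)
    (Φ h : ℝ → ℝ) (F : ℝ → ℝ → ℝ)
    (hΦconv : ConvexOn ℝ (Set.Icc (-a) a) Φ)
    (hΦcont : ContinuousOn Φ (Set.Icc (-a) a))
    (hFcont : ContinuousOn (fun p : ℝ × ℝ => F p.1 p.2) (Set.Icc 0 T ×ˢ Set.univ))
    (hFbdd : ∃ C : ℝ, ∀ t ∈ Set.Icc 0 T, ∀ s : ℝ, |F t s| ≤ C)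
    (hh : Continuous h) (hmean : (∫ t in (0:ℝ)..T, h t) = 0) :
    ∃ w : ℝ → ℝ,
      (LipschitzOnWith (Real.toNNReal a) w (Set.Icc 0 T) ∧ w 0 = w T ∧
        (∫ t in (0:ℝ)..T, w t) = 0) ∧
      ∀ v : ℝ → ℝ,
        LipschitzOnWith (Real.toNNReal a) v (Set.Icc 0 T) → v 0 = v T →
        (∫ t in (0:ℝ)..T, v t) = 0 →
        (∫ t in (0:ℝ)..T, (Φ (deriv w t) + h t * w t + F t (w t))) ≤
          ∫ t in (0:ℝ)..T, (Φ (deriv v t) + h t * v t + F t (v t)) := by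
  classical
  let Jk : ℕ → (Icc (0:ℝ) T →ᵇ ℝ) → ℝ := fun k f =>
    (∫ t in (0:ℝ)..T, Phit a Φ (slopef T k (extf hT.le f) t))
      + ∫ t in (0:ℝ)..T, (h t * extf hT.le f t + F t (extf hT.le f t))
  let J : (Icc (0:ℝ) T →ᵇ ℝ) → ℝ := fun f =>
    (∫ t in (0:ℝ)..T, Phit a Φ (deriv (extf hT.le f) t))
      + ∫ t in (0:ℝ)..T, (h t * extf hT.le f t + F t (extf hT.le f t))
  have hcompact := Kset_compact (a := a) hT ha.le
  have hKne := Kset_nonempty (a := a) hT ha.le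
  have hminex : ∀ k : ℕ, ∃ fk ∈ Kset T a hT.le, ∀ f ∈ Kset T a hT.le, Jk k fk ≤ Jk k f := by
    intro k
    obtain ⟨fk, hfk, hmin⟩ := hcompact.exists_isMinOn hKne (Jk_cont hT ha.le hΦcont hFcont hh k)
    exact ⟨fk, hfk, fun f hf => hmin hf⟩
  choose fk hfkK hfkmin using hminex
  obtain ⟨fhat, hfhatK, φ, hφmono, hφtend⟩ := hcompact.tendsto_subseq hfkK
  have hEkP : ∀ f ∈ Kset T a hT.le, ∀ k,
      (∫ t in (0:ℝ)..T, Phit a Φ (slopef T k (extf hT.le f) t))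
        ≤ ∫ t in (0:ℝ)..T, Phit a Φ (deriv (extf hT.le f) t) := by
    intro f hf k
    exact Monotone.ge_of_tendsto
      (monotone_nat_of_le_succ (fun n => Efun_mono hT ha.le hΦconv hΦcont
        (lip_abs ha.le hf.1) hf.1.continuous n))
      (tendsto_Efun hT ha.le hΦcont hf.1) k
  have hmain : ∀ f ∈ Kset T a hT.le, J fhat ≤ J f := by
    intro f hfK
    have hstep : ∀ j, Jk j fhat ≤ J f := by
      intro j
      have htend : Tendsto (fun i => Jk j (fk (φ i))) atTop (nhds (Jk j fhat)) := by
        have hc := (Jk_cont hT ha.le hΦcont hFcont hh j) fhat hfhatK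
        exact hc.tendsto.comp (tendsto_nhdsWithin_of_tendsto_nhds_of_eventually_within _ hφtend
          (Filter.Eventually.of_forall (fun i => hfkK (φ i))))
      refine le_of_tendsto htend ?_
      filter_upwards [Filter.eventually_ge_atTop j] with i hi
      have hφi : j ≤ φ i := le_trans hi hφmono.le_apply
      have hm1 : Jk j (fk (φ i)) ≤ Jk (φ i) (fk (φ i)) := by
        have hmono := monotone_nat_of_le_succ (fun n => Efun_mono hT ha.le hΦconv hΦcont
          (lip_abs ha.le (hfkK (φ i)).1) (hfkK (φ i)).1.continuous n)
        exact add_le_add_left (hmono hφi) _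
      have hm2 : Jk (φ i) (fk (φ i)) ≤ Jk (φ i) f := hfkmin (φ i) f hfK
      have hm3 : Jk (φ i) f ≤ J f := add_le_add_left (hEkP f hfK (φ i)) _
      linarith
    have htendJ : Tendsto (fun j => Jk j fhat) atTop (nhds (J fhat)) :=
      (tendsto_Efun hT ha.le hΦcont hfhatK.1).add_const _
    exact le_of_tendsto htendJ (Filter.Eventually.of_forall hstep)
  refine ⟨extf hT.le fhat, ⟨hfhatK.1.lipschitzOnWith, hfhatK.2.1, hfhatK.2.2⟩, ?_⟩
  intro v hvlip hvper hvzero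
  have hvcont : ContinuousOn v (Icc 0 T) := hvlip.continuousOn
  let fv : Icc (0:ℝ) T →ᵇ ℝ :=
    BoundedContinuousFunction.mkOfCompact ⟨(Icc (0:ℝ) T).restrict v, hvcont.restrict⟩
  have hfvext : ∀ t ∈ Icc (0:ℝ) T, extf hT.le fv t = v t := by
    intro t ht; rw [extf_of_mem hT.le fv ht]; rfl
  have hfvlip : LipschitzWith (Real.toNNReal a) (extf hT.le fv) := by
    have := (hvlip.to_restrict).comp (LipschitzWith.projIcc (a := (0:ℝ)) (b := T) hT.le)
    simp only [mul_one] at this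
    exact this
  have hfvK : fv ∈ Kset T a hT.le := by
    refine ⟨hfvlip, ?_, ?_⟩
    · rw [hfvext 0 ⟨le_refl 0, hT.le⟩, hfvext T ⟨hT.le, le_refl T⟩]; exact hvper
    · rw [intervalIntegral.integral_congr (g := v)
        (fun t ht => hfvext t (by rwa [uIcc_of_le hT.le] at ht))]
      exact hvzero
  have hrepr_v : (∫ t in (0:ℝ)..T, (Φ (deriv v t) + h t * v t + F t (v t))) = J fv :=
    repr_integral hT ha hΦcont hFcont hh hfvext hfvlip
  have hrepr_w : (∫ t in (0:ℝ)..T,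
      (Φ (deriv (extf hT.le fhat) t) + h t * extf hT.le fhat t + F t (extf hT.le fhat t)))
      = J fhat :=
    repr_integral hT ha hΦcont hFcont hh (fun t _ => rfl) hfhatK.1
  rw [hrepr_v, hrepr_w]
  exact hmain fv hfvK
end

section
/- Let Φ : [−a,a] → ℝ satisfy Φ(s) ≥ k s² for some k > 0, let F : [0,T] × ℝ → ℝ be continuous with F(t,s) ≥ F₀, and h : [0,T] → ℝ continuous. Assume T ≤ 2π (so the Poincaré–Wirtinger inequality ∫₀^T v² ≤ ∫₀^T v'² holds for zero-mean periodic Lipschitz v). Then for every zero-mean T-periodic Lipschitz function ṽ with ‖ṽ'‖_∞ ≤ a: ∫₀^T [Φ(ṽ') + h ṽ + F(t,ṽ)] dt ≥ F₀ T − T ‖h‖_∞² / (4k). -/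
open Set MeasureTheory

section Helpers
open Set MeasureTheory AddCircle Complex
open scoped ENNReal

lemma parseval_aux (T : ℝ) [hT : Fact (0 < T)] (g : ℝ → ℂ) (hg : Measurable g)
    (C : ℝ) (hb : ∀ x ∈ Set.Ioc (0:ℝ) (0 + T), ‖g x‖ ≤ C) :
    Summable (fun i : ℤ => ‖fourierCoeff (AddCircle.liftIoc T 0 g) i‖ ^ 2) ∧
    (∑' i : ℤ, ‖fourierCoeff (AddCircle.liftIoc T 0 g) i‖ ^ 2)
      = (1 / T) * ∫ t in Set.Ioc (0:ℝ) (0 + T), ‖g t‖ ^ 2 := by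
  set u : AddCircle T → ℂ := AddCircle.liftIoc T 0 g with hu
  have hum : Measurable u := by
    exact (hg.comp measurable_subtype_coe).comp (measurableEquivIoc T 0).measurable_toFun
  have hub : ∀ x, ‖u x‖ ≤ C := by
    intro x
    have h1 : u x = g ((equivIoc T 0 x : ℝ)) := rfl
    rw [h1]
    exact hb _ (equivIoc T 0 x).2
  have hmem : MemLp u 2 haarAddCircle :=
    MemLp.of_bound hum.aestronglyMeasurable C (Filter.Eventually.of_forall hub)
  set f : Lp ℂ 2 (@haarAddCircle T hT) := hmem.toLp u with hf
  have hfu : ∀ n : ℤ, fourierCoeff (⇑f) n = fourierCoeff u n := by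
    intro n
    exact integral_congr_ae ((Filter.EventuallyEq.refl _ _).mul (hmem.coeFn_toLp))
  have hP := tsum_sq_fourierCoeff f
  have hsum : Summable (fun i : ℤ => ‖fourierCoeff u i‖ ^ 2) := by
    have h2 : Memℓp (fun i : ℤ => fourierBasis.repr f i) 2 := lp.memℓp _
    have h3 := (memℓp_gen_iff (by norm_num : (0:ℝ) < (2:ℝ≥0∞).toReal)).1 h2
    have h4 : ∀ i : ℤ, ‖fourierBasis.repr f i‖ ^ ((2:ℝ≥0∞).toReal) = ‖fourierCoeff u i‖ ^ (2:ℕ) := by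
      intro i
      rw [fourierBasis_repr, hfu,
        show ((2:ℝ≥0∞).toReal) = ((2:ℕ):ℝ) by norm_num, Real.rpow_natCast]
    exact h3.congr h4
  have hint : ∫ t : AddCircle T, ‖f t‖ ^ 2 ∂haarAddCircle
      = (1 / T) * ∫ t in Set.Ioc (0:ℝ) (0 + T), ‖g t‖ ^ 2 := by
    have h5 : ∫ t : AddCircle T, ‖f t‖ ^ 2 ∂haarAddCircle
        = ∫ t : AddCircle T, ‖u t‖ ^ 2 ∂haarAddCircle := by
      refine integral_congr_ae ?_
      filter_upwards [hmem.coeFn_toLp] with x hx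
      rw [hx]
    have h6 : ∫ t : AddCircle T, ‖u t‖ ^ 2 ∂(volume : Measure (AddCircle T))
        = ENNReal.toReal (ENNReal.ofReal T) • ∫ t : AddCircle T, ‖u t‖ ^ 2 ∂haarAddCircle := by
      rw [volume_eq_smul_haarAddCircle, integral_smul_measure]
    have h7 : (∫ t in Set.Ioc (0:ℝ) (0 + T), ‖u (t : AddCircle T)‖ ^ 2)
        = ∫ t : AddCircle T, ‖u t‖ ^ 2 ∂(volume : Measure (AddCircle T)) :=
      AddCircle.integral_preimage T 0 (fun x => ‖u x‖ ^ 2)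
    have h8 : (∫ t in Set.Ioc (0:ℝ) (0 + T), ‖u (t : AddCircle T)‖ ^ 2)
        = ∫ t in Set.Ioc (0:ℝ) (0 + T), ‖g t‖ ^ 2 := by
      refine setIntegral_congr_fun measurableSet_Ioc fun x hx => ?_
      rw [hu, AddCircle.liftIoc_coe_apply hx]
    rw [h5, ← h8, h7, h6, ENNReal.toReal_ofReal hT.out.le, smul_eq_mul, ← mul_assoc,
      one_div, inv_mul_cancel₀ hT.out.ne', one_mul]
  constructor
  · simpa [hfu] using hsum
  · rw [← hint, ← hP]
    congr 1
    ext i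
    rw [hfu]

lemma wirtinger (T : ℝ) (hT : 0 < T) (hT2 : T ≤ 2 * Real.pi)
    (v v' : ℝ → ℝ) (hv : ∀ t : ℝ, HasDerivAt v (v' t) t)
    (hv'm : Measurable v') (Cd : ℝ) (hv'b : ∀ t ∈ Set.Icc (0:ℝ) T, |v' t| ≤ Cd)
    (hper : v 0 = v T) (hmean : (∫ t in (0:ℝ)..T, v t) = 0) :
    (∫ t in (0:ℝ)..T, (v t) ^ 2) ≤ ∫ t in (0:ℝ)..T, (v' t) ^ 2 := by
  haveI : Fact (0 < T) := ⟨hT⟩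
  have hab : (0:ℝ) < 0 + T := lt_add_of_pos_right 0 hT
  set gv : ℝ → ℂ := fun t => (v t : ℂ) with hgv
  set gd : ℝ → ℂ := fun t => (v' t : ℂ) with hgd
  have vc : Continuous v := by
    rw [continuous_iff_continuousAt]; exact fun t => (hv t).continuousAt
  have hgvm : Measurable gv := Complex.measurable_ofReal.comp vc.measurable
  have hgdm : Measurable gd := Complex.measurable_ofReal.comp hv'm
  obtain ⟨Cv, hCv⟩ := (isCompact_Icc (a := (0:ℝ)) (b := T)).exists_bound_of_continuousOn
    vc.continuousOn
  have hIoc : Set.Ioc (0:ℝ) (0 + T) ⊆ Set.Icc (0:ℝ) T := by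
    rw [zero_add]; exact Set.Ioc_subset_Icc_self
  have Pv := parseval_aux T gv hgvm Cv (fun x hx => by
    simpa [hgv, Complex.norm_real] using hCv x (hIoc hx))
  have Pd := parseval_aux T gd hgdm Cd (fun x hx => by
    simpa [hgd, Complex.norm_real] using hv'b x (hIoc hx))
  set c : ℤ → ℂ := fun n => fourierCoeff (AddCircle.liftIoc T 0 gv) n with hc
  set d : ℤ → ℂ := fun n => fourierCoeff (AddCircle.liftIoc T 0 gd) n with hd
  -- derivative integrability
  have hgdint : IntervalIntegrable gd volume 0 (0 + T) := by
    rw [intervalIntegrable_iff_integrableOn_Ioc_of_le hab.le]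
    refine Integrable.mono' (integrable_const Cd) (hgdm.aestronglyMeasurable.restrict) ?_
    refine (ae_restrict_iff' measurableSet_Ioc).2 (Filter.Eventually.of_forall fun x hx => ?_)
    simpa [hgd, Complex.norm_real] using hv'b x (hIoc hx)
  -- coefficient relation
  have hcd : ∀ n : ℤ, ‖c n‖ ≤ ‖d n‖ := by
    intro n
    rcases eq_or_ne n 0 with rfl | hn
    · have : c 0 = 0 := by
        rw [hc]
        simp only [fourierCoeff_liftIoc_eq]
        rw [fourierCoeffOn_eq_integral]
        simp only [neg_zero, fourier_zero, one_smul, zero_add, sub_zero]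
        rw [hgv, intervalIntegral.integral_ofReal, hmean]
        simp
      simp [this]
    · have hrel := fourierCoeffOn_of_hasDerivAt hab hn
        (f := gv) (f' := gd)
        (fun x _ => (hv x).ofReal_comp)
        hgdint
      have hz : gv (0 + T) - gv 0 = 0 := by
        simp [hgv, zero_add, hper]
      rw [hz, mul_zero, zero_sub] at hrel
      have hc' : c n = 1 / (-2 * Real.pi * Complex.I * n) * -((T:ℂ) * d n) := by
        rw [hc, hd]
        simp only [fourierCoeff_liftIoc_eq]
        rw [hrel]
        push_cast
        ring
      rw [hc']
      rw [norm_mul, norm_neg, norm_mul]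
      have h2 : ‖(1 : ℂ) / (-2 * Real.pi * Complex.I * n)‖ = 1 / (2 * Real.pi * |(n:ℝ)|) := by
        rw [norm_div, norm_one]
        congr 1
        simp only [norm_mul, Complex.norm_I, Complex.norm_intCast]
        rw [show ((-2 : ℂ)) = ((-2 : ℝ) : ℂ) by norm_num, Complex.norm_real,
          Complex.norm_real]
        rw [Real.norm_eq_abs, Real.norm_eq_abs, abs_neg, _root_.abs_two,
          _root_.abs_of_nonneg Real.pi_pos.le]
        ring
      rw [h2]
      have hnorm : ‖((T : ℝ) : ℂ)‖ = T := by
        rw [Complex.norm_real, Real.norm_eq_abs, _root_.abs_of_pos hT]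
      rw [hnorm]
      have h1n : (1:ℝ) ≤ |(n:ℝ)| := by
        rw [← Int.cast_abs]
        exact_mod_cast Int.one_le_abs hn
      have hpi : (0:ℝ) < 2 * Real.pi * |(n:ℝ)| := by positivity
      have hkey : 1 / (2 * Real.pi * |(n:ℝ)|) * T ≤ 1 := by
        rw [div_mul_eq_mul_div, one_mul, div_le_one hpi]
        calc T ≤ 2 * Real.pi := hT2
        _ = 2 * Real.pi * 1 := by ring
        _ ≤ 2 * Real.pi * |(n:ℝ)| := by
            have := Real.pi_pos; nlinarith
      calc 1 / (2 * Real.pi * |(n:ℝ)|) * (T * ‖d n‖)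
          = (1 / (2 * Real.pi * |(n:ℝ)|) * T) * ‖d n‖ := by ring
        _ ≤ 1 * ‖d n‖ := by
            apply mul_le_mul_of_nonneg_right hkey (norm_nonneg _)
        _ = ‖d n‖ := one_mul _
  have htsum : (∑' i : ℤ, ‖c i‖ ^ 2) ≤ ∑' i : ℤ, ‖d i‖ ^ 2 :=
    Summable.tsum_le_tsum (fun i => pow_le_pow_left₀ (norm_nonneg _) (hcd i) 2) Pv.1 Pd.1
  rw [Pv.2, Pd.2] at htsum
  have hIvv : (∫ t in Set.Ioc (0:ℝ) (0 + T), ‖gv t‖ ^ 2) = ∫ t in (0:ℝ)..T, (v t) ^ 2 := by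
    rw [intervalIntegral.integral_of_le hT.le, zero_add]
    refine setIntegral_congr_fun measurableSet_Ioc fun x _ => ?_
    rw [hgv]; rw [Complex.norm_real, Real.norm_eq_abs, _root_.sq_abs]
  have hIdd : (∫ t in Set.Ioc (0:ℝ) (0 + T), ‖gd t‖ ^ 2) = ∫ t in (0:ℝ)..T, (v' t) ^ 2 := by
    rw [intervalIntegral.integral_of_le hT.le, zero_add]
    refine setIntegral_congr_fun measurableSet_Ioc fun x _ => ?_
    rw [hgd]; rw [Complex.norm_real, Real.norm_eq_abs, _root_.sq_abs]
  rw [hIvv, hIdd] at htsum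
  have := mul_le_mul_of_nonneg_left htsum hT.le
  calc (∫ t in (0:ℝ)..T, (v t) ^ 2)
      = T * (1 / T * ∫ t in (0:ℝ)..T, (v t) ^ 2) := by field_simp
    _ ≤ T * (1 / T * ∫ t in (0:ℝ)..T, (v' t) ^ 2) := this
    _ = ∫ t in (0:ℝ)..T, (v' t) ^ 2 := by field_simp

end Helpers

/-- If `Φ(s) ≥ k s²` on `[−a,a]`, `F ≥ F₀` is continuous, `h` is continuous, and
`T ≤ 2π`, then for every zero-mean `T`-periodic Lipschitz `ṽ` with `‖ṽ'‖_∞ ≤ a`: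
`∫₀^T [Φ(ṽ') + h ṽ + F(t,ṽ)] dt ≥ F₀ T − T ‖h‖_∞² / (4k)`. -/
theorem stmt12 (T a k F₀ : ℝ) (hT : 0 < T) (hT2 : T ≤ 2 * Real.pi)
    (ha : 0 < a) (hk : 0 < k)
    (Φ : ℝ → ℝ) (hΦcont : ContinuousOn Φ (Set.Icc (-a) a))
    (hΦ : ∀ s ∈ Set.Icc (-a) a, k * s ^ 2 ≤ Φ s)
    (F : ℝ → ℝ → ℝ)
    (hFcont : ContinuousOn (fun p : ℝ × ℝ => F p.1 p.2) (Set.Icc 0 T ×ˢ Set.univ))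
    (hF₀ : ∀ t ∈ Set.Icc 0 T, ∀ s : ℝ, F₀ ≤ F t s)
    (h : ℝ → ℝ) (hh : Continuous h)
    (v v' : ℝ → ℝ) (hv : ∀ t : ℝ, HasDerivAt v (v' t) t)
    (hv' : ∀ t ∈ Set.Icc 0 T, |v' t| ≤ a)
    (hper : v 0 = v T) (hmean : (∫ t in (0:ℝ)..T, v t) = 0) :
    F₀ * T - T * (⨆ t : Set.Icc (0:ℝ) T, |h t.1|) ^ 2 / (4 * k) ≤
      ∫ t in (0:ℝ)..T, (Φ (v' t) + h t * v t + F t (v t)) := by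
  haveI hne : Nonempty (Set.Icc (0:ℝ) T) := ⟨⟨0, le_refl 0, hT.le⟩⟩
  set M := (⨆ t : Set.Icc (0:ℝ) T, |h t.1|) with hMdef
  have hbdd : BddAbove (Set.range fun t : Set.Icc (0:ℝ) T => |h t.1|) := by
    have hre : (Set.range fun t : Set.Icc (0:ℝ) T => |h t.1|)
        = (fun x => |h x|) '' Set.Icc 0 T := by
      ext y
      constructor
      · rintro ⟨t, rfl⟩; exact ⟨t.1, t.2, rfl⟩
      · rintro ⟨x, hx, rfl⟩; exact ⟨⟨x, hx⟩, rfl⟩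
    rw [hre]
    exact (isCompact_Icc.image_of_continuousOn (hh.abs.continuousOn)).bddAbove
  have hM : ∀ t ∈ Set.Icc (0:ℝ) T, |h t| ≤ M := fun t ht => le_ciSup hbdd ⟨t, ht⟩
  have hM0 : 0 ≤ M := le_trans (abs_nonneg _) (hM 0 ⟨le_refl 0, hT.le⟩)
  have vc : Continuous v := by
    rw [continuous_iff_continuousAt]; exact fun t => (hv t).continuousAt
  have hv'm : Measurable v' := by
    have hd : v' = deriv v := funext fun t => ((hv t).deriv).symm
    rw [hd]; exact measurable_deriv v
  have haa : -a ≤ a := by linarith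
  set Φe : ℝ → ℝ := Set.IccExtend haa ((Set.Icc (-a) a).restrict Φ) with hΦe
  have hΦec : Continuous Φe := (hΦcont.restrict).Icc_extend'
  have hΦeq : ∀ s ∈ Set.Icc (-a) a, Φe s = Φ s := fun s hs => by
    rw [hΦe, Set.IccExtend_of_mem haa _ hs]
    rfl
  have hv'mem : ∀ t ∈ Set.Icc (0:ℝ) T, v' t ∈ Set.Icc (-a) a := fun t ht =>
    ⟨(abs_le.mp (hv' t ht)).1, (abs_le.mp (hv' t ht)).2⟩
  obtain ⟨CΦ, hCΦ⟩ := (isCompact_Icc (a := -a) (b := a)).exists_bound_of_continuousOn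
    hΦec.continuousOn
  have II : ∀ f : ℝ → ℝ, Measurable f → ∀ C : ℝ, (∀ t ∈ Set.Ioc (0:ℝ) T, |f t| ≤ C) →
      IntervalIntegrable f volume 0 T := by
    intro f hm C hC
    rw [intervalIntegrable_iff_integrableOn_Ioc_of_le hT.le]
    refine Integrable.mono' (integrable_const C) hm.aestronglyMeasurable.restrict ?_
    refine (ae_restrict_iff' measurableSet_Ioc).2 (Filter.Eventually.of_forall fun x hx => ?_)
    simpa [Real.norm_eq_abs] using hC x hx
  have IΦe : IntervalIntegrable (fun t => Φe (v' t)) volume 0 T :=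
    II _ (hΦec.measurable.comp hv'm) CΦ (fun t ht => by
      rw [← Real.norm_eq_abs]
      exact hCΦ _ (hv'mem t (Set.Ioc_subset_Icc_self ht)))
  have Ihv : IntervalIntegrable (fun t => h t * v t) volume 0 T :=
    (hh.mul vc).intervalIntegrable 0 T
  have IF : IntervalIntegrable (fun t => F t (v t)) volume 0 T := by
    apply ContinuousOn.intervalIntegrable
    rw [Set.uIcc_of_le hT.le]
    exact hFcont.comp ((continuous_id.prodMk vc).continuousOn) (fun t ht => ⟨ht, trivial⟩)
  have Iv'2 : IntervalIntegrable (fun t => k * (v' t) ^ 2) volume 0 T :=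
    II _ ((hv'm.pow_const 2).const_mul k) (k * a ^ 2) (fun t ht => by
      have h1 := abs_le.mp (hv' t (Set.Ioc_subset_Icc_self ht))
      have h2 : (v' t) ^ 2 ≤ a ^ 2 := sq_le_sq' h1.1 h1.2
      rw [_root_.abs_of_nonneg (by positivity)]
      nlinarith)
  have Ikv2hv : IntervalIntegrable (fun t => k * (v t) ^ 2 + h t * v t) volume 0 T :=
    ((continuous_const.mul (vc.pow 2)).add (hh.mul vc)).intervalIntegrable 0 T
  have Ikv2 : IntervalIntegrable (fun t => k * (v t) ^ 2) volume 0 T :=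
    (continuous_const.mul (vc.pow 2)).intervalIntegrable 0 T
  have heq : (∫ t in (0:ℝ)..T, (Φ (v' t) + h t * v t + F t (v t)))
      = ∫ t in (0:ℝ)..T, (Φe (v' t) + h t * v t + F t (v t)) := by
    apply intervalIntegral.integral_congr
    intro t ht
    rw [Set.uIcc_of_le hT.le] at ht
    dsimp only
    rw [hΦeq _ (hv'mem t ht)]
  rw [heq]
  have hsplit : (∫ t in (0:ℝ)..T, (Φe (v' t) + h t * v t + F t (v t)))
      = ((∫ t in (0:ℝ)..T, Φe (v' t)) + ∫ t in (0:ℝ)..T, h t * v t)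
        + ∫ t in (0:ℝ)..T, F t (v t) := by
    rw [intervalIntegral.integral_add (IΦe.add Ihv) IF, intervalIntegral.integral_add IΦe Ihv]
  have hF : T * F₀ ≤ ∫ t in (0:ℝ)..T, F t (v t) := by
    calc T * F₀ = (T - 0) • F₀ := by rw [smul_eq_mul]; ring
      _ = ∫ _ in (0:ℝ)..T, F₀ := (intervalIntegral.integral_const _).symm
      _ ≤ _ := intervalIntegral.integral_mono_on hT.le (intervalIntegrable_const) IF
          (fun x hx => hF₀ x hx (v x))
  have hA1 : (∫ t in (0:ℝ)..T, k * (v' t) ^ 2) ≤ ∫ t in (0:ℝ)..T, Φe (v' t) :=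
    intervalIntegral.integral_mono_on hT.le Iv'2 IΦe (fun x hx => by
      rw [hΦeq _ (hv'mem x hx)]
      exact hΦ _ (hv'mem x hx))
  have W := wirtinger T hT hT2 v v' hv hv'm a hv' hper hmean
  have hA2 : (∫ t in (0:ℝ)..T, k * (v t) ^ 2) ≤ ∫ t in (0:ℝ)..T, k * (v' t) ^ 2 := by
    rw [intervalIntegral.integral_const_mul, intervalIntegral.integral_const_mul]
    exact mul_le_mul_of_nonneg_left W hk.le
  have hA3 : T * (-(M ^ 2) / (4 * k)) ≤ ∫ t in (0:ℝ)..T, (k * (v t) ^ 2 + h t * v t) := by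
    have hpt : ∀ x ∈ Set.Icc (0:ℝ) T, (-(M ^ 2) / (4 * k)) ≤ k * (v x) ^ 2 + h x * v x := by
      intro x hx
      have hhx := hM x hx
      have h1 : (h x) ^ 2 ≤ M ^ 2 := by nlinarith [abs_nonneg (h x), _root_.sq_abs (h x)]
      have h2 := sq_nonneg (2 * k * (v x) + h x)
      rw [div_le_iff₀ (by positivity : (0:ℝ) < 4 * k)]
      nlinarith
    calc T * (-(M ^ 2) / (4 * k)) = (T - 0) • (-(M ^ 2) / (4 * k)) := by rw [smul_eq_mul]; ring
      _ = ∫ _ in (0:ℝ)..T, (-(M ^ 2) / (4 * k)) := (intervalIntegral.integral_const _).symm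
      _ ≤ _ := intervalIntegral.integral_mono_on hT.le (intervalIntegrable_const) Ikv2hv hpt
  have hcomb : (∫ t in (0:ℝ)..T, (k * (v t) ^ 2 + h t * v t))
      = (∫ t in (0:ℝ)..T, k * (v t) ^ 2) + ∫ t in (0:ℝ)..T, h t * v t :=
    intervalIntegral.integral_add Ikv2 Ihv
  have harith : T * (-(M ^ 2) / (4 * k)) = -(T * M ^ 2 / (4 * k)) := by ring
  linarith [hsplit, hF, hA1, hA2, hA3, hcomb, harith]
end
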